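/- For every integer m ≥ 1 and every integer j with 0 ≤ j ≤ m−1, the functions ψ_{mj} and ψ*_{mj} on the Heisenberg group G are invariant under left multiplication by Γ: ψ_{mj}(γg) = ψ_{mj}(g) and ψ*_{mj}(γg) = ψ*_{mj}(g) for all γ ∈ Γ and g ∈ G. In particular, they induce well-defined functions on the nilmanifold Γ\G. -/
import Mathlib


set_option linter.unreachableTactic false
set_option linter.unusedTactic false

/-- The 3-dimensional Heisenberg group: an element represents the upper
unitriangular matrix with rows `(1, y, z), (0, 1, x), (0, 0, 1)`. -/
@[ext]
structure Heisenberg : Type where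
  x : ℝ
  y : ℝ
  z : ℝ

namespace Heisenberg

instance : Mul Heisenberg :=
  ⟨fun a b => ⟨a.x + b.x, a.y + b.y, a.z + b.z + a.y * b.x⟩⟩

instance : One Heisenberg := ⟨⟨0, 0, 0⟩⟩

instance : Inv Heisenberg := ⟨fun a => ⟨-a.x, -a.y, -a.z + a.y * a.x⟩⟩

@[simp] theorem mul_x (a b : Heisenberg) : (a * b).x = a.x + b.x := rfl
@[simp] theorem mul_y (a b : Heisenberg) : (a * b).y = a.y + b.y := rfl
@[simp] theorem mul_z (a b : Heisenberg) : (a * b).z = a.z + b.z + a.y * b.x := rfl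
@[simp] theorem one_x : (1 : Heisenberg).x = 0 := rfl
@[simp] theorem one_y : (1 : Heisenberg).y = 0 := rfl
@[simp] theorem one_z : (1 : Heisenberg).z = 0 := rfl
@[simp] theorem inv_x (a : Heisenberg) : a⁻¹.x = -a.x := rfl
@[simp] theorem inv_y (a : Heisenberg) : a⁻¹.y = -a.y := rfl
@[simp] theorem inv_z (a : Heisenberg) : a⁻¹.z = -a.z + a.y * a.x := rfl

instance : Group Heisenberg where
  mul_assoc a b c := by ext <;> simp <;> ring
  one_mul a := by ext <;> simp
  mul_one a := by ext <;> simp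
  inv_mul_cancel a := by ext <;> simp <;> ring

/-- The topology on the Heisenberg group, induced from `ℝ³`. -/
instance : TopologicalSpace Heisenberg :=
  TopologicalSpace.induced (fun g => (g.x, g.y, g.z)) inferInstance

end Heisenberg

/-- The lattice `Γ ≤ G` of upper unitriangular matrices with integer entries. -/
def HeisenbergGamma : Subgroup Heisenberg where
  carrier := {g | (∃ a : ℤ, g.x = a) ∧ (∃ b : ℤ, g.y = b) ∧ (∃ c : ℤ, g.z = c)}
  mul_mem' := by
    rintro a b ⟨⟨a1, ha1⟩, ⟨a2, ha2⟩, ⟨a3, ha3⟩⟩ ⟨⟨b1, hb1⟩, ⟨b2, hb2⟩, ⟨b3, hb3⟩⟩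
    refine ⟨⟨a1 + b1, ?_⟩, ⟨a2 + b2, ?_⟩, ⟨a3 + b3 + a2 * b1, ?_⟩⟩ <;>
      simp [ha1, ha2, ha3, hb1, hb2, hb3] <;> push_cast <;> ring
  one_mem' := ⟨⟨0, by simp⟩, ⟨0, by simp⟩, ⟨0, by simp⟩⟩
  inv_mem' := by
    rintro a ⟨⟨a1, ha1⟩, ⟨a2, ha2⟩, ⟨a3, ha3⟩⟩
    refine ⟨⟨-a1, ?_⟩, ⟨-a2, ?_⟩, ⟨-a3 + a2 * a1, ?_⟩⟩ <;>
      simp [ha1, ha2, ha3] <;> push_cast <;> ring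

/-- The Heisenberg nilmanifold `Γ\G`, the space of left cosets `Γg`. -/
def Nilmanifold : Type := Quotient (QuotientGroup.rightRel HeisenbergGamma)

instance : TopologicalSpace Nilmanifold :=
  inferInstanceAs (TopologicalSpace (Quotient _))

/-- The coset `Γg` as a point of the nilmanifold. -/
def Nilmanifold.mk (g : Heisenberg) : Nilmanifold :=
  Quotient.mk (QuotientGroup.rightRel HeisenbergGamma) g

/-- `e(x) = e^{2πix}`. -/
noncomputable def eFun (x : ℝ) : ℂ := Complex.exp (2 * Real.pi * Complex.I * x)

/-- The function `ψ_{mj}` on the Heisenberg group. -/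
noncomputable def psiMJ (m j : ℕ) (g : Heisenberg) : ℂ :=
  eFun (m * g.z + j * g.x) *
    ∑' b : ℤ, (Real.exp (-Real.pi * (g.y + b + (j : ℝ) / m) ^ 2) : ℂ) *
      eFun (m * b * g.x)

/-- The function `ψ*_{mj}` on the Heisenberg group. -/
noncomputable def psiStarMJ (m j : ℕ) (g : Heisenberg) : ℂ :=
  Complex.I * eFun (m * g.z + j * g.x) *
    ∑' b : ℤ, (Real.exp (-Real.pi * (g.y + b + (j : ℝ) / m + 1 / 2) ^ 2) : ℂ) *
      eFun ((1 / 2) * (g.y + b + (j : ℝ) / m) + m * b * g.x)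

/-- The class `𝒜` of continuous functions on `𝕋 × Γ\G` of the form
`f(t, Γg) = e(ξ₁t + ξ₂x + ξ₃y)·ψ(Γg)` with `ψ` one of `ψ_{mj}`, `ψ̄_{mj}`,
`ψ*_{mj}`, `ψ̄*_{mj}`. -/
def InClassA (f : UnitAddCircle × Nilmanifold → ℂ) : Prop :=
  Continuous f ∧
  ∃ (ξ₁ ξ₂ ξ₃ : ℤ) (m j : ℕ), 1 ≤ m ∧ j < m ∧
    ∃ ψf : Heisenberg → ℂ,
      (ψf = psiMJ m j ∨ ψf = (fun g => starRingEnd ℂ (psiMJ m j g)) ∨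
        ψf = psiStarMJ m j ∨ ψf = (fun g => starRingEnd ℂ (psiStarMJ m j g))) ∧
      ∀ t x y z : ℝ,
        f ((t : UnitAddCircle), Nilmanifold.mk ⟨x, y, z⟩)
          = eFun (ξ₁ * t + ξ₂ * x + ξ₃ * y) * ψf ⟨x, y, z⟩

lemma eFun_add (a b : ℝ) : eFun (a + b) = eFun a * eFun b := by
  rw [eFun, eFun, eFun, ← Complex.exp_add]
  push_cast
  ring_nf

lemma eFun_int (n : ℤ) : eFun n = 1 := by
  rw [eFun, show (2 * Real.pi * Complex.I : ℂ) * (n : ℝ) = n * (2 * Real.pi * Complex.I) by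
    push_cast; ring]
  exact Complex.exp_int_mul_two_pi_mul_I n

lemma eFun_eq_of (x y : ℝ) (n : ℤ) (h : x = y + n) : eFun x = eFun y := by
  rw [h, eFun_add, eFun_int, mul_one]

/-- **`Γ`-invariance of `ψ_{mj}` and `ψ*_{mj}`**: for `m ≥ 1` and `0 ≤ j ≤ m−1`,
the functions `ψ_{mj}` and `ψ*_{mj}` on the Heisenberg group are invariant under
left multiplication by elements of `Γ`, hence descend to `Γ\G`. -/
theorem psiMJ_psiStarMJ_left_invariant
    (m j : ℕ) (hm : 1 ≤ m) (hj : j < m)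
    (γ : Heisenberg) (hγ : γ ∈ HeisenbergGamma) (g : Heisenberg) :
    psiMJ m j (γ * g) = psiMJ m j g ∧ psiStarMJ m j (γ * g) = psiStarMJ m j g := by
  obtain ⟨⟨a, ha⟩, ⟨b, hb⟩, ⟨c, hc⟩⟩ := hγ
  have hpre : ∀ u : ℂ, eFun ((m : ℝ) * (γ.z + g.z + γ.y * g.x) + (j : ℝ) * (γ.x + g.x)) *
      (eFun (-(↑m * ↑b * g.x)) * u) = eFun ((m : ℝ) * g.z + (j : ℝ) * g.x) * u := by
    intro u
    rw [← mul_assoc, ← eFun_add]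
    congr 1
    apply eFun_eq_of _ _ ((m : ℤ) * c + (j : ℤ) * a)
    rw [ha, hb, hc]; push_cast; ring
  constructor
  · unfold psiMJ
    simp only [Heisenberg.mul_x, Heisenberg.mul_y, Heisenberg.mul_z]
    have hsum : (∑' k : ℤ, (Real.exp (-Real.pi * (γ.y + g.y + (k : ℝ) + (j : ℝ) / m) ^ 2) : ℂ) *
          eFun ((m : ℝ) * k * (γ.x + g.x)))
        = eFun (-(↑m * ↑b * g.x)) *
          ∑' k : ℤ, (Real.exp (-Real.pi * (g.y + (k : ℝ) + (j : ℝ) / m) ^ 2) : ℂ) *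
            eFun ((m : ℝ) * k * g.x) := by
      rw [← tsum_mul_left,
        ← (Equiv.addRight (b : ℤ)).tsum_eq (fun k : ℤ =>
          eFun (-(↑m * ↑b * g.x)) * ((Real.exp (-Real.pi * (g.y + (k : ℝ) + (j : ℝ) / m) ^ 2) : ℂ) *
            eFun ((m : ℝ) * k * g.x)))]
      refine tsum_congr fun k => ?_
      simp only [Equiv.coe_addRight]
      have h1 : (-Real.pi * (γ.y + g.y + (k : ℝ) + (j : ℝ) / m) ^ 2)
          = (-Real.pi * (g.y + ((k + b : ℤ) : ℝ) + (j : ℝ) / m) ^ 2) := by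
        rw [hb]; push_cast; ring
      have h2 : eFun ((m : ℝ) * k * (γ.x + g.x))
          = eFun (-(↑m * ↑b * g.x)) * eFun ((m : ℝ) * ((k + b : ℤ) : ℝ) * g.x) := by
        rw [← eFun_add]
        apply eFun_eq_of _ _ ((m : ℤ) * k * a)
        rw [ha]; push_cast; ring
      rw [h1, h2]; ring
    rw [hsum, hpre]
  · unfold psiStarMJ
    simp only [Heisenberg.mul_x, Heisenberg.mul_y, Heisenberg.mul_z]
    have hsum : (∑' k : ℤ, (Real.exp (-Real.pi * (γ.y + g.y + (k : ℝ) + (j : ℝ) / m + 1 / 2) ^ 2) : ℂ) *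
          eFun (1 / 2 * (γ.y + g.y + (k : ℝ) + (j : ℝ) / m) + (m : ℝ) * k * (γ.x + g.x)))
        = eFun (-(↑m * ↑b * g.x)) *
          ∑' k : ℤ, (Real.exp (-Real.pi * (g.y + (k : ℝ) + (j : ℝ) / m + 1 / 2) ^ 2) : ℂ) *
            eFun (1 / 2 * (g.y + (k : ℝ) + (j : ℝ) / m) + (m : ℝ) * k * g.x) := by
      rw [← tsum_mul_left,
        ← (Equiv.addRight (b : ℤ)).tsum_eq (fun k : ℤ =>
          eFun (-(↑m * ↑b * g.x)) *
            ((Real.exp (-Real.pi * (g.y + (k : ℝ) + (j : ℝ) / m + 1 / 2) ^ 2) : ℂ) *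
              eFun (1 / 2 * (g.y + (k : ℝ) + (j : ℝ) / m) + (m : ℝ) * k * g.x)))]
      refine tsum_congr fun k => ?_
      simp only [Equiv.coe_addRight]
      have h1 : (-Real.pi * (γ.y + g.y + (k : ℝ) + (j : ℝ) / m + 1 / 2) ^ 2)
          = (-Real.pi * (g.y + ((k + b : ℤ) : ℝ) + (j : ℝ) / m + 1 / 2) ^ 2) := by
        rw [hb]; push_cast; ring
      have h2 : eFun (1 / 2 * (γ.y + g.y + (k : ℝ) + (j : ℝ) / m) + (m : ℝ) * k * (γ.x + g.x))
          = eFun (-(↑m * ↑b * g.x)) *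
            eFun (1 / 2 * (g.y + ((k + b : ℤ) : ℝ) + (j : ℝ) / m) + (m : ℝ) * ((k + b : ℤ) : ℝ) * g.x) := by
        rw [← eFun_add]
        apply eFun_eq_of _ _ ((m : ℤ) * k * a)
        rw [ha, hb]; push_cast; ring
      rw [h1, h2]; ring
    rw [hsum, mul_assoc Complex.I, hpre, ← mul_assoc]
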